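/- For every untyped proof term v of HA+EM1, if v ↦ w (one step of the HA+EM1 reduction relation), then the translation of v reduces to the translation of w in at least one step of the HA+NEM reduction relation: ⟨v⟩ ≻⁺ ⟨w⟩. -/

import Mathlib

/-! ### First-order arithmetic terms of the language L -/

inductive Trm : Type
  | var  : ℕ → Trm
  | zero : Trm
  | succ : Trm → Trm

/-- The numeral `S … S 0`. -/
def Trm.num : ℕ → Trm
  | 0 => .zero
  | n + 1 => .succ (Trm.num n)

def Trm.eval (ρ : ℕ → ℕ) : Trm → ℕ
  | .var α => ρ α
  | .zero => 0
  | .succ t => Trm.eval ρ t + 1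

/-- Substitution `t[m/α]` in first-order terms. -/
def Trm.subst (α : ℕ) (m : Trm) : Trm → Trm
  | .var β => if β = α then m else .var β
  | .zero => .zero
  | .succ t => .succ (Trm.subst α m t)

def Trm.fv : Trm → Set ℕ
  | .var α => {α}
  | .zero => ∅
  | .succ t => Trm.fv t

/-- A symbol for a primitive recursive (decidable) relation on ℕ,
    given by its boolean interpretation. -/
structure PredSym where
  interp : List ℕ → Bool

/-- `¬P`, the atomic predicate equivalent to the boolean negation of `P`. -/
def PredSym.not (P : PredSym) : PredSym := ⟨fun l => ! P.interp l⟩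

/-- The atomic formula `P(t₁,…,tₙ)` is true (under every environment;
    for closed instances this is ordinary truth). -/
def atomTrue (P : PredSym) (args : List Trm) : Prop :=
  ∀ ρ : ℕ → ℕ, P.interp (args.map (Trm.eval ρ)) = true

def atomFalse (P : PredSym) (args : List Trm) : Prop :=
  ∀ ρ : ℕ → ℕ, P.interp (args.map (Trm.eval ρ)) = false

/-! ### Formulas of HA -/

inductive Formula : Type
  | atom : PredSym → List Trm → Formula
  | and  : Formula → Formula → Formula
  | or   : Formula → Formula → Formula
  | imp  : Formula → Formula → Formula
  | all  : ℕ → Formula → Formula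
  | ex   : ℕ → Formula → Formula

/-- Substitution `A[m/α]` in formulas. -/
def Formula.subst (α : ℕ) (m : Trm) : Formula → Formula
  | .atom P args => .atom P (args.map (Trm.subst α m))
  | .and A B => .and (A.subst α m) (B.subst α m)
  | .or A B => .or (A.subst α m) (B.subst α m)
  | .imp A B => .imp (A.subst α m) (B.subst α m)
  | .all β A => if β = α then .all β A else .all β (A.subst α m)
  | .ex β A => if β = α then .ex β A else .ex β (A.subst α m)

/-- Free first-order variables of a formula. -/
def Formula.fv : Formula → Set ℕ
  | .atom _ args => {β | ∃ t ∈ args, β ∈ t.fv}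
  | .and A B => A.fv ∪ B.fv
  | .or A B => A.fv ∪ B.fv
  | .imp A B => A.fv ∪ B.fv
  | .all β A => A.fv \ {β}
  | .ex β A => A.fv \ {β}

def Formula.size : Formula → ℕ
  | .atom _ _ => 1
  | .and A B => A.size + B.size + 1
  | .or A B => A.size + B.size + 1
  | .imp A B => A.size + B.size + 1
  | .all _ A => A.size + 1
  | .ex _ A => A.size + 1

theorem Formula.size_subst (α : ℕ) (m : Trm) (A : Formula) :
    (A.subst α m).size = A.size := by
  induction A with
  | atom P args => simp [Formula.subst, Formula.size]
  | and A B ihA ihB => simp [Formula.subst, Formula.size, ihA, ihB]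
  | or A B ihA ihB => simp [Formula.subst, Formula.size, ihA, ihB]
  | imp A B ihA ihB => simp [Formula.subst, Formula.size, ihA, ihB]
  | all β A ih => by_cases h : β = α <;> simp [Formula.subst, Formula.size, h, ih]
  | ex β A ih => by_cases h : β = α <;> simp [Formula.subst, Formula.size, h, ih]
/-! ### Proof terms of HA + NEM -/

inductive PTm : Type
  | var     : ℕ → PTm                          -- x
  | app     : PTm → PTm → PTm                  -- t u
  | tapp    : PTm → Trm → PTm                  -- t m
  | lam     : ℕ → PTm → PTm                    -- λx u
  | tlam    : ℕ → PTm → PTm                    -- λα u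
  | pair    : PTm → PTm → PTm                  -- ⟨t,u⟩
  | proj    : Bool → PTm → PTm                 -- π₀ u / π₁ u
  | inj     : Bool → PTm → PTm                 -- ι₀(u) / ι₁(u)
  | case    : PTm → ℕ → PTm → ℕ → PTm → PTm    -- t[x.u, y.v]
  | exIntro : Trm → PTm → PTm                  -- (m, t)
  | exElim  : PTm → ℕ → ℕ → PTm → PTm          -- t[(α,x).u]
  | em      : PTm → PTm → PTm                  -- E(u,v)
  | hyp     : PredSym → List Trm → ℕ → PTm     -- HYP_P^α
  | wit     : PredSym → List Trm → ℕ → PTm     -- WIT_P^α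
  | tt      : PTm                              -- True
  | natrec  : PTm → PTm → Trm → PTm            -- rec u v m
  | const   : ℕ → PTm                          -- constant r (Post rules)

/-- Substitution `t[s/x]` of a proof term for a proof-term variable. -/
def PTm.psubst (x : ℕ) (s : PTm) : PTm → PTm
  | .var y => if y = x then s else .var y
  | .app t u => .app ((PTm.psubst x s t)) ((PTm.psubst x s u))
  | .tapp t m => .tapp ((PTm.psubst x s t)) m
  | .lam y u => if y = x then .lam y u else .lam y ((PTm.psubst x s u))
  | .tlam α u => .tlam α ((PTm.psubst x s u))
  | .pair t u => .pair ((PTm.psubst x s t)) ((PTm.psubst x s u))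
  | .proj i u => .proj i ((PTm.psubst x s u))
  | .inj i u => .inj i ((PTm.psubst x s u))
  | .case t y u z v =>
      .case ((PTm.psubst x s t)) y (if y = x then u else (PTm.psubst x s u))
        z (if z = x then v else (PTm.psubst x s v))
  | .exIntro m t => .exIntro m ((PTm.psubst x s t))
  | .exElim t α y u => .exElim ((PTm.psubst x s t)) α y (if y = x then u else (PTm.psubst x s u))
  | .em u v => .em ((PTm.psubst x s u)) ((PTm.psubst x s v))
  | .hyp P args α => .hyp P args α
  | .wit P args α => .wit P args α
  | .tt => .tt
  | .natrec u v m => .natrec ((PTm.psubst x s u)) ((PTm.psubst x s v)) m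
  | .const r => .const r

/-- Substitution `t[m/α]` of a first-order term for a first-order variable in a proof term. -/
def PTm.tsubst (α : ℕ) (m : Trm) : PTm → PTm
  | .var y => .var y
  | .app t u => .app ((PTm.tsubst α m t)) ((PTm.tsubst α m u))
  | .tapp t n => .tapp ((PTm.tsubst α m t)) (n.subst α m)
  | .lam y u => .lam y ((PTm.tsubst α m u))
  | .tlam β u => if β = α then .tlam β u else .tlam β ((PTm.tsubst α m u))
  | .pair t u => .pair ((PTm.tsubst α m t)) ((PTm.tsubst α m u))
  | .proj i u => .proj i ((PTm.tsubst α m u))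
  | .inj i u => .inj i ((PTm.tsubst α m u))
  | .case t y u z v => .case ((PTm.tsubst α m t)) y ((PTm.tsubst α m u)) z ((PTm.tsubst α m v))
  | .exIntro n t => .exIntro (n.subst α m) ((PTm.tsubst α m t))
  | .exElim t β y u =>
      .exElim ((PTm.tsubst α m t)) β y (if β = α then u else (PTm.tsubst α m u))
  | .em u v => .em ((PTm.tsubst α m u)) ((PTm.tsubst α m v))
  | .hyp P args β => if β = α then .hyp P args β else .hyp P (args.map (Trm.subst α m)) β
  | .wit P args β => if β = α then .wit P args β else .wit P (args.map (Trm.subst α m)) β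
  | .tt => .tt
  | .natrec u v n => .natrec ((PTm.tsubst α m u)) ((PTm.tsubst α m v)) (n.subst α m)
  | .const r => .const r

/-! ### The one-step reduction ≻ of HA + NEM -/

inductive NStep : PTm → PTm → Prop
  -- Reduction rules for HA
  | beta (x : ℕ) (u t : PTm) : NStep (.app (.lam x u) t) (PTm.psubst x t u)
  | tbeta (α : ℕ) (u : PTm) (m : Trm) : NStep (.tapp (.tlam α u) m) (PTm.tsubst α m u)
  | projPair (i : Bool) (u₀ u₁ : PTm) :
      NStep (.proj i (.pair u₀ u₁)) (if i then u₁ else u₀)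
  | caseInj₀ (u : PTm) (x₀ : ℕ) (t₀ : PTm) (x₁ : ℕ) (t₁ : PTm) :
      NStep (.case (.inj false u) x₀ t₀ x₁ t₁) (PTm.psubst x₀ u t₀)
  | caseInj₁ (u : PTm) (x₀ : ℕ) (t₀ : PTm) (x₁ : ℕ) (t₁ : PTm) :
      NStep (.case (.inj true u) x₀ t₀ x₁ t₁) (PTm.psubst x₁ u t₁)
  | exIE (n : ℕ) (u : PTm) (α x : ℕ) (v : PTm) :
      NStep (.exElim (.exIntro (Trm.num n) u) α x v) (PTm.psubst x u (PTm.tsubst α (Trm.num n) v))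
  | recZero (u v : PTm) : NStep (.natrec u v .zero) u
  | recSucc (u v : PTm) (n : ℕ) :
      NStep (.natrec u v (.succ (Trm.num n)))
            (.app (.tapp v (Trm.num n)) (.natrec u v (Trm.num n)))
  -- Permutation rules for NEM
  | permApp (u v w : PTm) : NStep (.app (.em u v) w) (.em (.app u w) (.app v w))
  | permTapp (u v : PTm) (m : Trm) : NStep (.tapp (.em u v) m) (.em (.tapp u m) (.tapp v m))
  | permProj (i : Bool) (u v : PTm) : NStep (.proj i (.em u v)) (.em (.proj i u) (.proj i v))
  | permCase (u v : PTm) (x : ℕ) (w₁ : PTm) (y : ℕ) (w₂ : PTm) :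
      NStep (.case (.em u v) x w₁ y w₂) (.em (.case u x w₁ y w₂) (.case v x w₁ y w₂))
  | permExElim (u v : PTm) (α x : ℕ) (w : PTm) :
      NStep (.exElim (.em u v) α x w) (.em (.exElim u α x w) (.exElim v α x w))
  -- Reduction rules for NEM
  | hypTrue (P : PredSym) (args : List Trm) (α : ℕ) (n : ℕ) :
      atomTrue P (args.map (Trm.subst α (Trm.num n))) →
      NStep (.tapp (.hyp P args α) (Trm.num n)) .tt
  | witIntro (P : PredSym) (args : List Trm) (α : ℕ) (n : ℕ) :
      NStep (.wit P args α) (.exIntro (Trm.num n) .tt)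
  | emL (u v : PTm) : NStep (.em u v) u
  | emR (u v : PTm) : NStep (.em u v) v
  -- Congruence (context closure)
  | congAppL {t t'} (u) : NStep t t' → NStep (.app t u) (.app t' u)
  | congAppR (t) {u u'} : NStep u u' → NStep (.app t u) (.app t u')
  | congTapp {t t'} (m) : NStep t t' → NStep (.tapp t m) (.tapp t' m)
  | congLam (x) {u u'} : NStep u u' → NStep (.lam x u) (.lam x u')
  | congTlam (α) {u u'} : NStep u u' → NStep (.tlam α u) (.tlam α u')
  | congPairL {t t'} (u) : NStep t t' → NStep (.pair t u) (.pair t' u)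
  | congPairR (t) {u u'} : NStep u u' → NStep (.pair t u) (.pair t u')
  | congProj (i) {u u'} : NStep u u' → NStep (.proj i u) (.proj i u')
  | congInj (i) {u u'} : NStep u u' → NStep (.inj i u) (.inj i u')
  | congCaseT {t t'} (x u y v) : NStep t t' → NStep (.case t x u y v) (.case t' x u y v)
  | congCaseL (t x) {u u'} (y v) : NStep u u' → NStep (.case t x u y v) (.case t x u' y v)
  | congCaseR (t x u y) {v v'} : NStep v v' → NStep (.case t x u y v) (.case t x u y v')
  | congExIntro (m) {t t'} : NStep t t' → NStep (.exIntro m t) (.exIntro m t')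
  | congExElimT {t t'} (α x u) : NStep t t' → NStep (.exElim t α x u) (.exElim t' α x u)
  | congExElimU (t α x) {u u'} : NStep u u' → NStep (.exElim t α x u) (.exElim t α x u')
  | congEmL {u u'} (v) : NStep u u' → NStep (.em u v) (.em u' v)
  | congEmR (u) {v v'} : NStep v v' → NStep (.em u v) (.em u v')
  | congRecU {u u'} (v m) : NStep u u' → NStep (.natrec u v m) (.natrec u' v m)
  | congRecV (u) {v v'} (m) : NStep v v' → NStep (.natrec u v m) (.natrec u v' m)

/-- `t ≻* t'`: zero or more reduction steps. -/
abbrev NSteps : PTm → PTm → Prop := Relation.ReflTransGen NStep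

/-- `t` is strongly normalizing w.r.t. ≻ (no infinite reduction sequence from `t`). -/
def NSN (t : PTm) : Prop := Acc (fun a b => NStep b a) t

/-- Neutral proof terms. -/
def Neutral : PTm → Prop
  | .lam _ _ => False
  | .tlam _ _ => False
  | .pair _ _ => False
  | .inj _ _ => False
  | .exIntro _ _ => False
  | .em _ _ => False
  | .hyp _ _ _ => False
  | _ => True

/-! ### Reducibility -/

/-- `Reducible C t`: "t is reducible of type C". -/
def Reducible : Formula → PTm → Prop
  | .atom _ _, t => NSN t
  | .and A B, t => Reducible A (.proj false t) ∧ Reducible B (.proj true t)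
  | .imp A B, t => ∀ u, Reducible A u → Reducible B (.app t u)
  | .or A B, t => NSN t ∧ (∀ u, NSteps t (.inj false u) → Reducible A u)
      ∧ (∀ u, NSteps t (.inj true u) → Reducible B u)
  | .all α A, t => ∀ n : Trm, Reducible (A.subst α n) (.tapp t n)
  | .ex α A, t => NSN t ∧ ∀ (n : Trm) (u : PTm), NSteps t (.exIntro n u) → Reducible (A.subst α n) u
termination_by A _ => A.size
decreasing_by all_goals simp only [Formula.size, Formula.size_subst] <;> omega
/-! ### Typing for HA + NEM -/

/-- A context entry: a proof-term variable declaration `x : A`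
    or an EM₁-hypothesis variable declaration `a : A`. -/
inductive CtxEntry : Type
  | pvar : ℕ → Formula → CtxEntry
  | hvar : ℕ → Formula → CtxEntry

abbrev Ctx : Type := List CtxEntry

def CtxEntry.isPvar : CtxEntry → Prop
  | .pvar _ _ => True
  | .hvar _ _ => False

def CtxEntry.formula : CtxEntry → Formula
  | .pvar _ A => A
  | .hvar _ A => A

def CtxEntry.fv (e : CtxEntry) : Set ℕ := e.formula.fv

/-- The proof term `r u₁ … uₙ` of a Post rule (`True` if `n = 0`). -/
def postTerm (r : ℕ) (us : List PTm) : PTm :=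
  if us.isEmpty then .tt else us.foldl PTm.app (.const r)

/-- The natural deduction system HA + NEM. -/
inductive NDeriv : Ctx → PTm → Formula → Prop
  | var {Γ : Ctx} {x : ℕ} {A : Formula} :
      CtxEntry.pvar x A ∈ Γ → NDeriv Γ (.var x) A
  | hypAx {Γ : Ctx} {a : ℕ} {P : PredSym} {args : List Trm} {α : ℕ} :
      CtxEntry.hvar a (.all α (.atom P args)) ∈ Γ →
      NDeriv Γ (.hyp P args α) (.all α (.atom P args))
  | witAx {Γ : Ctx} {a : ℕ} {P : PredSym} {args : List Trm} {α : ℕ} :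
      CtxEntry.hvar a (.ex α (.atom P.not args)) ∈ Γ →
      NDeriv Γ (.wit P args α) (.ex α (.atom P.not args))
  | andI {Γ u t A B} : NDeriv Γ u A → NDeriv Γ t B → NDeriv Γ (.pair u t) (.and A B)
  | andE₀ {Γ u A B} : NDeriv Γ u (.and A B) → NDeriv Γ (.proj false u) A
  | andE₁ {Γ u A B} : NDeriv Γ u (.and A B) → NDeriv Γ (.proj true u) B
  | impE {Γ t u A B} : NDeriv Γ t (.imp A B) → NDeriv Γ u A → NDeriv Γ (.app t u) B
  | impI {Γ x u A B} : NDeriv (CtxEntry.pvar x A :: Γ) u B → NDeriv Γ (.lam x u) (.imp A B)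
  | orI₀ {Γ u A B} : NDeriv Γ u A → NDeriv Γ (.inj false u) (.or A B)
  | orI₁ {Γ u A B} : NDeriv Γ u B → NDeriv Γ (.inj true u) (.or A B)
  | orE {Γ u x y w₁ w₂ A B C} :
      NDeriv Γ u (.or A B) → NDeriv (CtxEntry.pvar x A :: Γ) w₁ C →
      NDeriv (CtxEntry.pvar y B :: Γ) w₂ C → NDeriv Γ (.case u x w₁ y w₂) C
  | allE {Γ u α A} (m : Trm) : NDeriv Γ u (.all α A) → NDeriv Γ (.tapp u m) (A.subst α m)
  | allI {Γ u α A} :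
      NDeriv Γ u A → (∀ e ∈ Γ, α ∉ CtxEntry.fv e) → NDeriv Γ (.tlam α u) (.all α A)
  | exI {Γ u α A} (m : Trm) : NDeriv Γ u (A.subst α m) → NDeriv Γ (.exIntro m u) (.ex α A)
  | exE {Γ u t α x A C} :
      NDeriv Γ u (.ex α A) → NDeriv (CtxEntry.pvar x A :: Γ) t C →
      α ∉ Formula.fv C → (∀ e ∈ Γ, α ∉ CtxEntry.fv e) →
      NDeriv Γ (.exElim u α x t) C
  | ind {Γ u v α A} (m : Trm) :
      NDeriv Γ u (A.subst α .zero) →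
      NDeriv Γ v (.all α (.imp A (A.subst α (.succ (.var α))))) →
      NDeriv Γ (.natrec u v m) (A.subst α m)
  | post {Γ : Ctx} (r : ℕ) (Ps : List (PredSym × List Trm)) (P : PredSym)
      (args : List Trm) (us : List PTm) :
      (hlen : us.length = Ps.length) →
      (∀ (i : ℕ) (h₁ : i < us.length) (h₂ : i < Ps.length),
        NDeriv Γ (us.get ⟨i, h₁⟩) (.atom (Ps.get ⟨i, h₂⟩).1 (Ps.get ⟨i, h₂⟩).2)) →
      (∀ ρ : ℕ → ℕ, (∀ pa ∈ Ps, pa.1.interp (pa.2.map (Trm.eval ρ)) = true) →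
        P.interp (args.map (Trm.eval ρ)) = true) →
      NDeriv Γ (postTerm r us) (.atom P args)
  | nem {Γ w₁ w₂ C} {a : ℕ} {P : PredSym} {args : List Trm} {α : ℕ} :
      NDeriv (CtxEntry.hvar a (.all α (.atom P args)) :: Γ) w₁ C →
      NDeriv (CtxEntry.hvar a (.ex α (.atom P.not args)) :: Γ) w₂ C →
      NDeriv Γ (.em w₁ w₂) C
/-! ### Proof terms of HA + EM₁ (with hypothesis variables) -/

inductive EPTm : Type
  | var     : ℕ → EPTm
  | app     : EPTm → EPTm → EPTm
  | tapp    : EPTm → Trm → EPTm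
  | lam     : ℕ → EPTm → EPTm
  | tlam    : ℕ → EPTm → EPTm
  | pair    : EPTm → EPTm → EPTm
  | proj    : Bool → EPTm → EPTm
  | inj     : Bool → EPTm → EPTm
  | case    : EPTm → ℕ → EPTm → ℕ → EPTm → EPTm
  | exIntro : Trm → EPTm → EPTm
  | exElim  : EPTm → ℕ → ℕ → EPTm → EPTm
  | em      : ℕ → EPTm → EPTm → EPTm             -- E_a(u,v)
  | hyp     : ℕ → PredSym → List Trm → ℕ → EPTm  -- [a]HYP_P^α
  | wit     : ℕ → PredSym → List Trm → ℕ → EPTm  -- [a]WIT_P^α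
  | tt      : EPTm
  | natrec  : EPTm → EPTm → Trm → EPTm
  | const   : ℕ → EPTm

/-- Substitution `t[s/x]` of a proof term for a proof-term variable. -/
def EPTm.psubst (x : ℕ) (s : EPTm) : EPTm → EPTm
  | .var y => if y = x then s else .var y
  | .app t u => .app (EPTm.psubst x s t) (EPTm.psubst x s u)
  | .tapp t m => .tapp (EPTm.psubst x s t) m
  | .lam y u => if y = x then .lam y u else .lam y (EPTm.psubst x s u)
  | .tlam α u => .tlam α (EPTm.psubst x s u)
  | .pair t u => .pair (EPTm.psubst x s t) (EPTm.psubst x s u)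
  | .proj i u => .proj i (EPTm.psubst x s u)
  | .inj i u => .inj i (EPTm.psubst x s u)
  | .case t y u z v =>
      .case (EPTm.psubst x s t) y (if y = x then u else EPTm.psubst x s u)
        z (if z = x then v else EPTm.psubst x s v)
  | .exIntro m t => .exIntro m (EPTm.psubst x s t)
  | .exElim t α y u => .exElim (EPTm.psubst x s t) α y (if y = x then u else EPTm.psubst x s u)
  | .em a u v => .em a (EPTm.psubst x s u) (EPTm.psubst x s v)
  | .hyp a P args α => .hyp a P args α
  | .wit a P args α => .wit a P args α
  | .tt => .tt
  | .natrec u v m => .natrec (EPTm.psubst x s u) (EPTm.psubst x s v) m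
  | .const r => .const r

/-- Substitution `t[m/α]` of a first-order term in a proof term. -/
def EPTm.tsubst (α : ℕ) (m : Trm) : EPTm → EPTm
  | .var y => .var y
  | .app t u => .app (EPTm.tsubst α m t) (EPTm.tsubst α m u)
  | .tapp t n => .tapp (EPTm.tsubst α m t) (n.subst α m)
  | .lam y u => .lam y (EPTm.tsubst α m u)
  | .tlam β u => if β = α then .tlam β u else .tlam β (EPTm.tsubst α m u)
  | .pair t u => .pair (EPTm.tsubst α m t) (EPTm.tsubst α m u)
  | .proj i u => .proj i (EPTm.tsubst α m u)
  | .inj i u => .inj i (EPTm.tsubst α m u)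
  | .case t y u z v => .case (EPTm.tsubst α m t) y (EPTm.tsubst α m u) z (EPTm.tsubst α m v)
  | .exIntro n t => .exIntro (n.subst α m) (EPTm.tsubst α m t)
  | .exElim t β y u => .exElim (EPTm.tsubst α m t) β y (if β = α then u else EPTm.tsubst α m u)
  | .em a u v => .em a (EPTm.tsubst α m u) (EPTm.tsubst α m v)
  | .hyp a P args β => if β = α then .hyp a P args β else .hyp a P (args.map (Trm.subst α m)) β
  | .wit a P args β => if β = α then .wit a P args β else .wit a P (args.map (Trm.subst α m)) β
  | .tt => .tt
  | .natrec u v n => .natrec (EPTm.tsubst α m u) (EPTm.tsubst α m v) (n.subst α m)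
  | .const r => .const r

/-- `a` occurs free (as a hypothesis variable) in a term;
    `E_a(u,v)` binds `a` in both `u` and `v`. -/
def EPTm.hvFree (a : ℕ) : EPTm → Prop
  | .var _ => False
  | .app t u => EPTm.hvFree a t ∨ EPTm.hvFree a u
  | .tapp t _ => EPTm.hvFree a t
  | .lam _ u => EPTm.hvFree a u
  | .tlam _ u => EPTm.hvFree a u
  | .pair t u => EPTm.hvFree a t ∨ EPTm.hvFree a u
  | .proj _ u => EPTm.hvFree a u
  | .inj _ u => EPTm.hvFree a u
  | .case t _ u _ v => EPTm.hvFree a t ∨ EPTm.hvFree a u ∨ EPTm.hvFree a v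
  | .exIntro _ t => EPTm.hvFree a t
  | .exElim t _ _ u => EPTm.hvFree a t ∨ EPTm.hvFree a u
  | .em b u v => b ≠ a ∧ (EPTm.hvFree a u ∨ EPTm.hvFree a v)
  | .hyp b _ _ _ => b = a
  | .wit b _ _ _ => b = a
  | .tt => False
  | .natrec u v _ => EPTm.hvFree a u ∨ EPTm.hvFree a v
  | .const _ => False

/-- `[a]HYP_P^α n` occurs in the term (at a position where `a` is free). -/
def EPTm.occHypApp (a : ℕ) (P : PredSym) (args : List Trm) (β : ℕ) (n : ℕ) : EPTm → Prop
  | .var _ => False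
  | .app t u => EPTm.occHypApp a P args β n t ∨ EPTm.occHypApp a P args β n u
  | .tapp t m => (t = .hyp a P args β ∧ m = Trm.num n) ∨ EPTm.occHypApp a P args β n t
  | .lam _ u => EPTm.occHypApp a P args β n u
  | .tlam _ u => EPTm.occHypApp a P args β n u
  | .pair t u => EPTm.occHypApp a P args β n t ∨ EPTm.occHypApp a P args β n u
  | .proj _ u => EPTm.occHypApp a P args β n u
  | .inj _ u => EPTm.occHypApp a P args β n u
  | .case t _ u _ v =>
      EPTm.occHypApp a P args β n t ∨ EPTm.occHypApp a P args β n u ∨ EPTm.occHypApp a P args β n v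
  | .exIntro _ t => EPTm.occHypApp a P args β n t
  | .exElim t _ _ u => EPTm.occHypApp a P args β n t ∨ EPTm.occHypApp a P args β n u
  | .em b u v => b ≠ a ∧ (EPTm.occHypApp a P args β n u ∨ EPTm.occHypApp a P args β n v)
  | .hyp _ _ _ _ => False
  | .wit _ _ _ _ => False
  | .tt => False
  | .natrec u v _ => EPTm.occHypApp a P args β n u ∨ EPTm.occHypApp a P args β n v
  | .const _ => False

/-- `v[a := n]`: replace each subterm `[a]WIT_P^α` corresponding to a free
    occurrence of `a` by `(n, True)`. -/
def EPTm.witElim (a : ℕ) (n : ℕ) : EPTm → EPTm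
  | .var y => .var y
  | .app t u => .app (EPTm.witElim a n t) (EPTm.witElim a n u)
  | .tapp t m => .tapp (EPTm.witElim a n t) m
  | .lam y u => .lam y (EPTm.witElim a n u)
  | .tlam β u => .tlam β (EPTm.witElim a n u)
  | .pair t u => .pair (EPTm.witElim a n t) (EPTm.witElim a n u)
  | .proj i u => .proj i (EPTm.witElim a n u)
  | .inj i u => .inj i (EPTm.witElim a n u)
  | .case t y u z v => .case (EPTm.witElim a n t) y (EPTm.witElim a n u) z (EPTm.witElim a n v)
  | .exIntro m t => .exIntro m (EPTm.witElim a n t)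
  | .exElim t β y u => .exElim (EPTm.witElim a n t) β y (EPTm.witElim a n u)
  | .em b u v => if b = a then .em b u v else .em b (EPTm.witElim a n u) (EPTm.witElim a n v)
  | .hyp b P args β => .hyp b P args β
  | .wit b P args β => if b = a then .exIntro (Trm.num n) .tt else .wit b P args β
  | .tt => .tt
  | .natrec u v m => .natrec (EPTm.witElim a n u) (EPTm.witElim a n v) m
  | .const r => .const r

/-! ### The one-step reduction ↦ of HA + EM₁ -/

inductive EStep : EPTm → EPTm → Prop
  -- Reduction rules for HA
  | beta (x : ℕ) (u t : EPTm) : EStep (.app (.lam x u) t) (EPTm.psubst x t u)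
  | tbeta (α : ℕ) (u : EPTm) (m : Trm) : EStep (.tapp (.tlam α u) m) (EPTm.tsubst α m u)
  | projPair (i : Bool) (u₀ u₁ : EPTm) :
      EStep (.proj i (.pair u₀ u₁)) (if i then u₁ else u₀)
  | caseInj₀ (u : EPTm) (x₀ : ℕ) (t₀ : EPTm) (x₁ : ℕ) (t₁ : EPTm) :
      EStep (.case (.inj false u) x₀ t₀ x₁ t₁) (EPTm.psubst x₀ u t₀)
  | caseInj₁ (u : EPTm) (x₀ : ℕ) (t₀ : EPTm) (x₁ : ℕ) (t₁ : EPTm) :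
      EStep (.case (.inj true u) x₀ t₀ x₁ t₁) (EPTm.psubst x₁ u t₁)
  | exIE (n : ℕ) (u : EPTm) (α x : ℕ) (v : EPTm) :
      EStep (.exElim (.exIntro (Trm.num n) u) α x v)
            (EPTm.psubst x u (EPTm.tsubst α (Trm.num n) v))
  | recZero (u v : EPTm) : EStep (.natrec u v .zero) u
  | recSucc (u v : EPTm) (n : ℕ) :
      EStep (.natrec u v (.succ (Trm.num n)))
            (.app (.tapp v (Trm.num n)) (.natrec u v (Trm.num n)))
  -- Permutation rules for EM₁
  | permApp (a : ℕ) (u v w : EPTm) : EStep (.app (.em a u v) w) (.em a (.app u w) (.app v w))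
  | permTapp (a : ℕ) (u v : EPTm) (m : Trm) :
      EStep (.tapp (.em a u v) m) (.em a (.tapp u m) (.tapp v m))
  | permProj (a : ℕ) (i : Bool) (u v : EPTm) :
      EStep (.proj i (.em a u v)) (.em a (.proj i u) (.proj i v))
  | permCase (a : ℕ) (u v : EPTm) (x : ℕ) (w₁ : EPTm) (y : ℕ) (w₂ : EPTm) :
      EStep (.case (.em a u v) x w₁ y w₂) (.em a (.case u x w₁ y w₂) (.case v x w₁ y w₂))
  | permExElim (a : ℕ) (u v : EPTm) (α x : ℕ) (w : EPTm) :
      EStep (.exElim (.em a u v) α x w) (.em a (.exElim u α x w) (.exElim v α x w))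
  -- Reduction rules for EM₁
  | hypTrue (a : ℕ) (P : PredSym) (args : List Trm) (α : ℕ) (n : ℕ) :
      atomTrue P (args.map (Trm.subst α (Trm.num n))) →
      EStep (.tapp (.hyp a P args α) (Trm.num n)) .tt
  | emSimp (a : ℕ) (u v : EPTm) : ¬ EPTm.hvFree a u → EStep (.em a u v) u
  | emRaise (a : ℕ) (u v : EPTm) (P : PredSym) (args : List Trm) (α : ℕ) (n : ℕ) :
      EPTm.occHypApp a P args α n u →
      atomFalse P (args.map (Trm.subst α (Trm.num n))) →
      EStep (.em a u v) (EPTm.witElim a n v)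
  -- Congruence (context closure)
  | congAppL {t t'} (u) : EStep t t' → EStep (.app t u) (.app t' u)
  | congAppR (t) {u u'} : EStep u u' → EStep (.app t u) (.app t u')
  | congTapp {t t'} (m) : EStep t t' → EStep (.tapp t m) (.tapp t' m)
  | congLam (x) {u u'} : EStep u u' → EStep (.lam x u) (.lam x u')
  | congTlam (α) {u u'} : EStep u u' → EStep (.tlam α u) (.tlam α u')
  | congPairL {t t'} (u) : EStep t t' → EStep (.pair t u) (.pair t' u)
  | congPairR (t) {u u'} : EStep u u' → EStep (.pair t u) (.pair t u')
  | congProj (i) {u u'} : EStep u u' → EStep (.proj i u) (.proj i u')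
  | congInj (i) {u u'} : EStep u u' → EStep (.inj i u) (.inj i u')
  | congCaseT {t t'} (x u y v) : EStep t t' → EStep (.case t x u y v) (.case t' x u y v)
  | congCaseL (t x) {u u'} (y v) : EStep u u' → EStep (.case t x u y v) (.case t x u' y v)
  | congCaseR (t x u y) {v v'} : EStep v v' → EStep (.case t x u y v) (.case t x u y v')
  | congExIntro (m) {t t'} : EStep t t' → EStep (.exIntro m t) (.exIntro m t')
  | congExElimT {t t'} (α x u) : EStep t t' → EStep (.exElim t α x u) (.exElim t' α x u)
  | congExElimU (t α x) {u u'} : EStep u u' → EStep (.exElim t α x u) (.exElim t α x u')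
  | congEmL (a) {u u'} (v) : EStep u u' → EStep (.em a u v) (.em a u' v)
  | congEmR (a u) {v v'} : EStep v v' → EStep (.em a u v) (.em a u v')
  | congRecU {u u'} (v m) : EStep u u' → EStep (.natrec u v m) (.natrec u' v m)
  | congRecV (u) {v v'} (m) : EStep v v' → EStep (.natrec u v m) (.natrec u v' m)

/-- `t` is strongly normalizing w.r.t. ↦. -/
def ESN (t : EPTm) : Prop := Acc (fun a b => EStep b a) t

/-- The translation ⟨·⟩ from HA + EM₁ proof terms to HA + NEM proof terms:
    erase every `[a]` and replace each `E_a` by `E`. -/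
def EPTm.transl : EPTm → PTm
  | .var x => .var x
  | .app t u => .app (EPTm.transl t) (EPTm.transl u)
  | .tapp t m => .tapp (EPTm.transl t) m
  | .lam x u => .lam x (EPTm.transl u)
  | .tlam α u => .tlam α (EPTm.transl u)
  | .pair t u => .pair (EPTm.transl t) (EPTm.transl u)
  | .proj i u => .proj i (EPTm.transl u)
  | .inj i u => .inj i (EPTm.transl u)
  | .case t x u y v => .case (EPTm.transl t) x (EPTm.transl u) y (EPTm.transl v)
  | .exIntro m t => .exIntro m (EPTm.transl t)
  | .exElim t α x u => .exElim (EPTm.transl t) α x (EPTm.transl u)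
  | .em _ u v => .em (EPTm.transl u) (EPTm.transl v)
  | .hyp _ P args α => .hyp P args α
  | .wit _ P args α => .wit P args α
  | .tt => .tt
  | .natrec u v m => .natrec (EPTm.transl u) (EPTm.transl v) m
  | .const r => .const r

/-- The proof term `r u₁ … uₙ` of a Post rule in HA + EM₁. -/
def epostTerm (r : ℕ) (us : List EPTm) : EPTm :=
  if us.isEmpty then .tt else us.foldl EPTm.app (.const r)

/-- The natural deduction system HA + EM₁. -/
inductive EDeriv : Ctx → EPTm → Formula → Prop
  | var {Γ : Ctx} {x : ℕ} {A : Formula} :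
      CtxEntry.pvar x A ∈ Γ → EDeriv Γ (.var x) A
  | hypAx {Γ : Ctx} {a : ℕ} {P : PredSym} {args : List Trm} {α : ℕ} :
      CtxEntry.hvar a (.all α (.atom P args)) ∈ Γ →
      EDeriv Γ (.hyp a P args α) (.all α (.atom P args))
  | witAx {Γ : Ctx} {a : ℕ} {P : PredSym} {args : List Trm} {α : ℕ} :
      CtxEntry.hvar a (.ex α (.atom P.not args)) ∈ Γ →
      EDeriv Γ (.wit a P args α) (.ex α (.atom P.not args))
  | andI {Γ u t A B} : EDeriv Γ u A → EDeriv Γ t B → EDeriv Γ (.pair u t) (.and A B)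
  | andE₀ {Γ u A B} : EDeriv Γ u (.and A B) → EDeriv Γ (.proj false u) A
  | andE₁ {Γ u A B} : EDeriv Γ u (.and A B) → EDeriv Γ (.proj true u) B
  | impE {Γ t u A B} : EDeriv Γ t (.imp A B) → EDeriv Γ u A → EDeriv Γ (.app t u) B
  | impI {Γ x u A B} : EDeriv (CtxEntry.pvar x A :: Γ) u B → EDeriv Γ (.lam x u) (.imp A B)
  | orI₀ {Γ u A B} : EDeriv Γ u A → EDeriv Γ (.inj false u) (.or A B)
  | orI₁ {Γ u A B} : EDeriv Γ u B → EDeriv Γ (.inj true u) (.or A B)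
  | orE {Γ u x y w₁ w₂ A B C} :
      EDeriv Γ u (.or A B) → EDeriv (CtxEntry.pvar x A :: Γ) w₁ C →
      EDeriv (CtxEntry.pvar y B :: Γ) w₂ C → EDeriv Γ (.case u x w₁ y w₂) C
  | allE {Γ u α A} (m : Trm) : EDeriv Γ u (.all α A) → EDeriv Γ (.tapp u m) (A.subst α m)
  | allI {Γ u α A} :
      EDeriv Γ u A → (∀ e ∈ Γ, α ∉ CtxEntry.fv e) → EDeriv Γ (.tlam α u) (.all α A)
  | exI {Γ u α A} (m : Trm) : EDeriv Γ u (A.subst α m) → EDeriv Γ (.exIntro m u) (.ex α A)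
  | exE {Γ u t α x A C} :
      EDeriv Γ u (.ex α A) → EDeriv (CtxEntry.pvar x A :: Γ) t C →
      α ∉ Formula.fv C → (∀ e ∈ Γ, α ∉ CtxEntry.fv e) →
      EDeriv Γ (.exElim u α x t) C
  | ind {Γ u v α A} (m : Trm) :
      EDeriv Γ u (A.subst α .zero) →
      EDeriv Γ v (.all α (.imp A (A.subst α (.succ (.var α))))) →
      EDeriv Γ (.natrec u v m) (A.subst α m)
  | post {Γ : Ctx} (r : ℕ) (Ps : List (PredSym × List Trm)) (P : PredSym)
      (args : List Trm) (us : List EPTm) :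
      (hlen : us.length = Ps.length) →
      (∀ (i : ℕ) (h₁ : i < us.length) (h₂ : i < Ps.length),
        EDeriv Γ (us.get ⟨i, h₁⟩) (.atom (Ps.get ⟨i, h₂⟩).1 (Ps.get ⟨i, h₂⟩).2)) →
      (∀ ρ : ℕ → ℕ, (∀ pa ∈ Ps, pa.1.interp (pa.2.map (Trm.eval ρ)) = true) →
        P.interp (args.map (Trm.eval ρ)) = true) →
      EDeriv Γ (epostTerm r us) (.atom P args)
  | em₁ {Γ w₁ w₂ C} {a : ℕ} {P : PredSym} {args : List Trm} {α : ℕ} :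
      EDeriv (CtxEntry.hvar a (.all α (.atom P args)) :: Γ) w₁ C →
      EDeriv (CtxEntry.hvar a (.ex α (.atom P.not args)) :: Γ) w₂ C →
      EDeriv Γ (.em a w₁ w₂) C

/-! ### Auxiliary lemmas -/

theorem transl_psubst (x : ℕ) (s : EPTm) (t : EPTm) :
    (EPTm.psubst x s t).transl = PTm.psubst x s.transl t.transl := by
  induction t with
  | var y => simp [EPTm.psubst, EPTm.transl, PTm.psubst]; split <;> rfl
  | lam y u ih =>
      simp only [EPTm.psubst, EPTm.transl, PTm.psubst]
      split <;> simp [EPTm.transl, ih]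
  | case t y u z v iht ihu ihv =>
      simp only [EPTm.psubst, EPTm.transl, PTm.psubst]
      split <;> split <;> simp [EPTm.transl, iht, ihu, ihv]
  | exElim t α y u iht ihu =>
      simp only [EPTm.psubst, EPTm.transl, PTm.psubst]
      split <;> simp [EPTm.transl, iht, ihu]
  | _ => simp_all [EPTm.psubst, EPTm.transl, PTm.psubst]

theorem transl_tsubst (α : ℕ) (m : Trm) (t : EPTm) :
    (EPTm.tsubst α m t).transl = PTm.tsubst α m t.transl := by
  induction t with
  | tlam β u ih =>
      simp only [EPTm.tsubst, EPTm.transl, PTm.tsubst]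
      split <;> simp [EPTm.transl, ih]
  | exElim t β y u iht ihu =>
      simp only [EPTm.tsubst, EPTm.transl, PTm.tsubst]
      split <;> simp [EPTm.transl, iht, ihu]
  | hyp b P args β =>
      simp only [EPTm.tsubst, EPTm.transl, PTm.tsubst]
      split <;> simp [EPTm.transl]
  | wit b P args β =>
      simp only [EPTm.tsubst, EPTm.transl, PTm.tsubst]
      split <;> simp [EPTm.transl]
  | _ => simp_all [EPTm.tsubst, EPTm.transl, PTm.tsubst]

namespace NStepsCong

theorem app {t t' u u'} (h₁ : NSteps t t') (h₂ : NSteps u u') :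
    NSteps (.app t u) (.app t' u') :=
  (Relation.ReflTransGen.lift _ (fun _ _ h => NStep.congAppL u h) _ _ h₁).trans
    (Relation.ReflTransGen.lift _ (fun _ _ h => NStep.congAppR t' h) _ _ h₂)

theorem tapp {t t'} (m) (h : NSteps t t') : NSteps (.tapp t m) (.tapp t' m) :=
  Relation.ReflTransGen.lift _ (fun _ _ h => NStep.congTapp m h) _ _ h

theorem lam (x) {u u'} (h : NSteps u u') : NSteps (.lam x u) (.lam x u') :=
  Relation.ReflTransGen.lift _ (fun _ _ h => NStep.congLam x h) _ _ h

theorem tlam (α) {u u'} (h : NSteps u u') : NSteps (.tlam α u) (.tlam α u') :=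
  Relation.ReflTransGen.lift _ (fun _ _ h => NStep.congTlam α h) _ _ h

theorem pair {t t' u u'} (h₁ : NSteps t t') (h₂ : NSteps u u') :
    NSteps (.pair t u) (.pair t' u') :=
  (Relation.ReflTransGen.lift _ (fun _ _ h => NStep.congPairL u h) _ _ h₁).trans
    (Relation.ReflTransGen.lift _ (fun _ _ h => NStep.congPairR t' h) _ _ h₂)

theorem proj (i) {u u'} (h : NSteps u u') : NSteps (.proj i u) (.proj i u') :=
  Relation.ReflTransGen.lift _ (fun _ _ h => NStep.congProj i h) _ _ h

theorem inj (i) {u u'} (h : NSteps u u') : NSteps (.inj i u) (.inj i u') :=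
  Relation.ReflTransGen.lift _ (fun _ _ h => NStep.congInj i h) _ _ h

theorem case {t t'} (x) {u u'} (y) {v v'} (h₁ : NSteps t t') (h₂ : NSteps u u')
    (h₃ : NSteps v v') : NSteps (.case t x u y v) (.case t' x u' y v') :=
  ((Relation.ReflTransGen.lift (fun z => PTm.case z x u y v)
      (fun _ _ h => NStep.congCaseT x u y v h) _ _ h₁).trans
    (Relation.ReflTransGen.lift (fun z => PTm.case t' x z y v)
      (fun _ _ h => NStep.congCaseL t' x y v h) _ _ h₂)).trans
    (Relation.ReflTransGen.lift (fun z => PTm.case t' x u' y z)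
      (fun _ _ h => NStep.congCaseR t' x u' y h) _ _ h₃)

theorem exIntro (m) {t t'} (h : NSteps t t') : NSteps (.exIntro m t) (.exIntro m t') :=
  Relation.ReflTransGen.lift _ (fun _ _ h => NStep.congExIntro m h) _ _ h

theorem exElim {t t'} (α x) {u u'} (h₁ : NSteps t t') (h₂ : NSteps u u') :
    NSteps (.exElim t α x u) (.exElim t' α x u') :=
  (Relation.ReflTransGen.lift _ (fun _ _ h => NStep.congExElimT α x u h) _ _ h₁).trans
    (Relation.ReflTransGen.lift _ (fun _ _ h => NStep.congExElimU t' α x h) _ _ h₂)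

theorem em {u u' v v'} (h₁ : NSteps u u') (h₂ : NSteps v v') :
    NSteps (.em u v) (.em u' v') :=
  (Relation.ReflTransGen.lift _ (fun _ _ h => NStep.congEmL v h) _ _ h₁).trans
    (Relation.ReflTransGen.lift _ (fun _ _ h => NStep.congEmR u' h) _ _ h₂)

theorem natrec {u u' v v'} (m) (h₁ : NSteps u u') (h₂ : NSteps v v') :
    NSteps (.natrec u v m) (.natrec u' v' m) :=
  (Relation.ReflTransGen.lift _ (fun _ _ h => NStep.congRecU v m h) _ _ h₁).trans
    (Relation.ReflTransGen.lift _ (fun _ _ h => NStep.congRecV u' m h) _ _ h₂)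

end NStepsCong

theorem witElim_steps (a n : ℕ) (t : EPTm) :
    NSteps t.transl (EPTm.witElim a n t).transl := by
  induction t with
  | var y => exact .refl
  | app t u iht ihu => exact NStepsCong.app iht ihu
  | tapp t m iht => exact NStepsCong.tapp m iht
  | lam y u ih => exact NStepsCong.lam y ih
  | tlam β u ih => exact NStepsCong.tlam β ih
  | pair t u iht ihu => exact NStepsCong.pair iht ihu
  | proj i u ih => exact NStepsCong.proj i ih
  | inj i u ih => exact NStepsCong.inj i ih
  | case t y u z v iht ihu ihv => exact NStepsCong.case y z iht ihu ihv
  | exIntro m t ih => exact NStepsCong.exIntro m ih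
  | exElim t β y u iht ihu => exact NStepsCong.exElim β y iht ihu
  | em b u v ihu ihv =>
      simp only [EPTm.witElim]
      split
      · exact .refl
      · exact NStepsCong.em ihu ihv
  | hyp b P args β => exact .refl
  | wit b P args β =>
      simp only [EPTm.witElim]
      split
      · exact Relation.ReflTransGen.single (NStep.witIntro P args β n)
      · exact .refl
  | tt => exact .refl
  | natrec u v m ihu ihv => exact NStepsCong.natrec m ihu ihv
  | const r => exact .refl

/-- Preservation of the reduction relation ↦ by ≻:
    each ↦-step is simulated by at least one ≻-step on the translations. -/
theorem preservation_of_reduction (v w : EPTm) (h : EStep v w) :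
    Relation.TransGen NStep (EPTm.transl v) (EPTm.transl w) := by
  induction h with
  | beta x u t =>
      rw [transl_psubst]
      exact .single (NStep.beta x u.transl t.transl)
  | tbeta α u m =>
      rw [transl_tsubst]
      exact .single (NStep.tbeta α u.transl m)
  | projPair i u₀ u₁ =>
      have : EPTm.transl (if i then u₁ else u₀) = if i then u₁.transl else u₀.transl := by
        cases i <;> rfl
      rw [this]
      exact .single (NStep.projPair i u₀.transl u₁.transl)
  | caseInj₀ u x₀ t₀ x₁ t₁ =>
      rw [transl_psubst]
      exact .single (NStep.caseInj₀ u.transl x₀ t₀.transl x₁ t₁.transl)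
  | caseInj₁ u x₀ t₀ x₁ t₁ =>
      rw [transl_psubst]
      exact .single (NStep.caseInj₁ u.transl x₀ t₀.transl x₁ t₁.transl)
  | exIE n u α x v =>
      rw [transl_psubst, transl_tsubst]
      exact .single (NStep.exIE n u.transl α x v.transl)
  | recZero u v => exact .single (NStep.recZero u.transl v.transl)
  | recSucc u v n => exact .single (NStep.recSucc u.transl v.transl n)
  | permApp a u v w => exact .single (NStep.permApp u.transl v.transl w.transl)
  | permTapp a u v m => exact .single (NStep.permTapp u.transl v.transl m)
  | permProj a i u v => exact .single (NStep.permProj i u.transl v.transl)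
  | permCase a u v x w₁ y w₂ =>
      exact .single (NStep.permCase u.transl v.transl x w₁.transl y w₂.transl)
  | permExElim a u v α x w =>
      exact .single (NStep.permExElim u.transl v.transl α x w.transl)
  | hypTrue a P args α n ht => exact .single (NStep.hypTrue P args α n ht)
  | emSimp a u v _ => exact .single (NStep.emL u.transl v.transl)
  | emRaise a u v P args α n _ _ =>
      exact Relation.TransGen.head' (NStep.emR u.transl v.transl) (witElim_steps a n v)
  | congAppL u _ ih =>
      simpa only [EPTm.transl] using Relation.TransGen.lift (fun z => PTm.app z u.transl) (fun _ _ h => NStep.congAppL _ h) _ _ ih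
  | congAppR t _ ih =>
      simpa only [EPTm.transl] using Relation.TransGen.lift (fun z => PTm.app t.transl z) (fun _ _ h => NStep.congAppR _ h) _ _ ih
  | congTapp m _ ih =>
      simpa only [EPTm.transl] using Relation.TransGen.lift (fun z => PTm.tapp z m) (fun _ _ h => NStep.congTapp m h) _ _ ih
  | congLam x _ ih =>
      simpa only [EPTm.transl] using Relation.TransGen.lift (fun z => PTm.lam x z) (fun _ _ h => NStep.congLam x h) _ _ ih
  | congTlam α _ ih =>
      simpa only [EPTm.transl] using Relation.TransGen.lift (fun z => PTm.tlam α z) (fun _ _ h => NStep.congTlam α h) _ _ ih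
  | congPairL u _ ih =>
      simpa only [EPTm.transl] using Relation.TransGen.lift (fun z => PTm.pair z u.transl) (fun _ _ h => NStep.congPairL _ h) _ _ ih
  | congPairR t _ ih =>
      simpa only [EPTm.transl] using Relation.TransGen.lift (fun z => PTm.pair t.transl z) (fun _ _ h => NStep.congPairR _ h) _ _ ih
  | congProj i _ ih =>
      simpa only [EPTm.transl] using Relation.TransGen.lift (fun z => PTm.proj i z) (fun _ _ h => NStep.congProj i h) _ _ ih
  | congInj i _ ih =>
      simpa only [EPTm.transl] using Relation.TransGen.lift (fun z => PTm.inj i z) (fun _ _ h => NStep.congInj i h) _ _ ih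
  | congCaseT x u y vv _ ih =>
      simpa only [EPTm.transl] using Relation.TransGen.lift (fun z => PTm.case z x u.transl y vv.transl) (fun _ _ h => NStep.congCaseT x u.transl y vv.transl h) _ _ ih
  | congCaseL t x y vv _ ih =>
      simpa only [EPTm.transl] using Relation.TransGen.lift (fun z => PTm.case t.transl x z y vv.transl) (fun _ _ h => NStep.congCaseL t.transl x y vv.transl h) _ _ ih
  | congCaseR t x u y _ ih =>
      simpa only [EPTm.transl] using Relation.TransGen.lift (fun z => PTm.case t.transl x u.transl y z) (fun _ _ h => NStep.congCaseR t.transl x u.transl y h) _ _ ih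
  | congExIntro m _ ih =>
      simpa only [EPTm.transl] using Relation.TransGen.lift (fun z => PTm.exIntro m z) (fun _ _ h => NStep.congExIntro m h) _ _ ih
  | congExElimT α x u _ ih =>
      simpa only [EPTm.transl] using Relation.TransGen.lift (fun z => PTm.exElim z α x u.transl) (fun _ _ h => NStep.congExElimT α x u.transl h) _ _ ih
  | congExElimU t α x _ ih =>
      simpa only [EPTm.transl] using Relation.TransGen.lift (fun z => PTm.exElim t.transl α x z) (fun _ _ h => NStep.congExElimU t.transl α x h) _ _ ih
  | congEmL a vv _ ih =>
      simpa only [EPTm.transl] using Relation.TransGen.lift (fun z => PTm.em z vv.transl) (fun _ _ h => NStep.congEmL vv.transl h) _ _ ih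
  | congEmR a u _ ih =>
      simpa only [EPTm.transl] using Relation.TransGen.lift (fun z => PTm.em u.transl z) (fun _ _ h => NStep.congEmR u.transl h) _ _ ih
  | congRecU vv m _ ih =>
      simpa only [EPTm.transl] using Relation.TransGen.lift (fun z => PTm.natrec z vv.transl m) (fun _ _ h => NStep.congRecU vv.transl m h) _ _ ih
  | congRecV u m _ ih =>
      simpa only [EPTm.transl] using Relation.TransGen.lift (fun z => PTm.natrec u.transl z m) (fun _ _ h => NStep.congRecV u.transl m h) _ _ ih
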